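/- For integers n ≥ 2 and k large enough, |ℬ_{k,n}| ≤ exp[(ψ(n) + o(k))·kn] where ψ(n) = (2/(2n-1))·((2n+1)/(2n-1) + ln(2n-1)); more precisely, |ℬ_{k,n}| ≤ (k/(2n-1) + 2) · exp[((ln 4)/(2n-1) + ln(2n)/(nk) + h_e(2/(2n+1))·(2n+1)/(2n-1))·nk]. -/

import Mathlib

open Filter

/-- The binary entropy function. -/
noncomputable def binEnt (q : ℝ) : ℝ := -q * Real.log q - (1 - q) * Real.log (1 - q)

/-- The set `ℬ^r_{k,n}` of `r`-partitions: pairs of nondecreasing sequences of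
length `r+1` starting at `1`, ending at `k·n + 1`, whose block size sums lie in
`{2n-1, 2n}` except possibly `≤ 2n` for the last block. -/
def PartSet (r k n : ℕ) : Set ((Fin (r + 1) → ℕ) × (Fin (r + 1) → ℕ)) :=
  {p | Monotone p.1 ∧ Monotone p.2 ∧ p.1 0 = 1 ∧ p.2 0 = 1 ∧
    p.1 (Fin.last r) = k * n + 1 ∧ p.2 (Fin.last r) = k * n + 1 ∧
    ∀ j : Fin r,
      ((j : ℕ) + 1 < r →
        (p.1 j.succ - p.1 j.castSucc) + (p.2 j.succ - p.2 j.castSucc)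
          ∈ ({2 * n - 1, 2 * n} : Set ℕ)) ∧
      ((j : ℕ) + 1 = r →
        (p.1 j.succ - p.1 j.castSucc) + (p.2 j.succ - p.2 j.castSucc) ≤ 2 * n)}



private lemma bernoulli2 (m : ℕ) (u : ℝ) (hu : 0 ≤ u) :
    1 + (m:ℝ)*u + (m:ℝ)*((m:ℝ)-1)/2*u^2 ≤ (1+u)^m := by
  induction m with
  | zero => simp
  | succ p ih =>
      have hp : (0:ℝ) ≤ (p:ℝ) := Nat.cast_nonneg p
      have hpp : (0:ℝ) ≤ (p:ℝ)*((p:ℝ)-1) := by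
        rcases Nat.eq_zero_or_pos p with h | h
        · simp [h]
        · have : (1:ℝ) ≤ (p:ℝ) := by exact_mod_cast h
          nlinarith
      have hpp3 : (0:ℝ) ≤ (p:ℝ)*((p:ℝ)-1)*u^3 := by positivity
      have key := mul_le_mul_of_nonneg_right ih (by linarith : (0:ℝ) ≤ 1 + u)
      have h1 : (1+u)^(p+1) = (1+u)^p * (1+u) := by ring
      push_cast
      rw [h1]
      nlinarith [key, hpp3]

private lemma binEnt_eval (N : ℝ) (hN : 2 ≤ N) :
    binEnt (2/(2*N+1)) * (2*N+1)
      = 2*Real.log ((2*N+1)/2) + (2*N-1)*Real.log ((2*N+1)/(2*N-1)) := by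
  have h1 : (0:ℝ) < 2*N+1 := by linarith
  have h2 : (0:ℝ) < 2*N-1 := by linarith
  have h3 : (1:ℝ) - 2/(2*N+1) = (2*N-1)/(2*N+1) := by field_simp; ring
  unfold binEnt
  rw [h3, Real.log_div (by norm_num) h1.ne', Real.log_div h2.ne' h1.ne',
    Real.log_div h1.ne' (by norm_num), Real.log_div h1.ne' h2.ne']
  field_simp
  ring

private lemma nat_telescope (F : ℕ → ℕ) (hF : Monotone F) (i : ℕ) :
    F i = F 0 + ∑ j ∈ Finset.range i, (F (j+1) - F j) := by
  induction i with
  | zero => simp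
  | succ m ih =>
      have h := hF (Nat.le_succ m)
      have h2 : F m.succ = F (m+1) := rfl
      rw [Finset.sum_range_succ, ← Nat.add_assoc, ← ih]
      omega

private lemma partset_card_le (n k r : ℕ) (hn : 1 ≤ n) :
    Nat.card (PartSet r k n) ≤ (4*n+1)^(r-1) := by
  classical
  set dnu : ℕ → ℕ := fun m => if m < 2*n then m else m - 2*n with hdnu
  set dta : ℕ → ℕ := fun m => if m < 2*n then 2*n-1-m else 4*n-m with hdta
  set F : (Fin (r-1) → Fin (4*n+1)) → (Fin (r+1) → ℕ) × (Fin (r+1) → ℕ) :=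
    fun c =>
      (fun i => if (i:ℕ) = r then k*n+1 else
         1 + ∑ j ∈ Finset.range (i:ℕ), dnu (if h : j < r-1 then (c ⟨j,h⟩ : ℕ) else 0),
       fun i => if (i:ℕ) = r then k*n+1 else
         1 + ∑ j ∈ Finset.range (i:ℕ), dta (if h : j < r-1 then (c ⟨j,h⟩ : ℕ) else 0)) with hFdef
  have hsub : PartSet r k n ⊆ Set.range F := by
    rintro ⟨f, g⟩ ⟨hfm, hgm, hf0, hg0, hfl, hgl, hblk⟩
    dsimp only at hfm hgm hf0 hg0 hfl hgl hblk
    set Fe : ℕ → ℕ := fun m => f ⟨min m r, by omega⟩ with hFe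
    set Ge : ℕ → ℕ := fun m => g ⟨min m r, by omega⟩ with hGe
    have hFem : Monotone Fe := fun a b hab => hfm (by simp [Fin.le_def]; omega)
    have hGem : Monotone Ge := fun a b hab => hgm (by simp [Fin.le_def]; omega)
    have hFe0 : Fe 0 = 1 := by
      have h0 : (⟨min 0 r, by omega⟩ : Fin (r+1)) = 0 := by ext; simp
      simpa [hFe, h0] using hf0
    have hGe0 : Ge 0 = 1 := by
      have h0 : (⟨min 0 r, by omega⟩ : Fin (r+1)) = 0 := by ext; simp
      simpa [hGe, h0] using hg0
    have hsucc : ∀ (j : ℕ) (hj : j < r), f (Fin.succ ⟨j, hj⟩) = Fe (j+1) := by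
      intro j hj
      have h2 : (Fin.succ (⟨j, hj⟩ : Fin r)) = (⟨min (j+1) r, by omega⟩ : Fin (r+1)) := by
        ext; simp [Fin.succ]; omega
      rw [h2]
    have hcast : ∀ (j : ℕ) (hj : j < r), f (Fin.castSucc ⟨j, hj⟩) = Fe j := by
      intro j hj
      have h2 : (Fin.castSucc (⟨j, hj⟩ : Fin r)) = (⟨min j r, by omega⟩ : Fin (r+1)) := by
        ext; simp; omega
      rw [h2]
    have hsucc' : ∀ (j : ℕ) (hj : j < r), g (Fin.succ ⟨j, hj⟩) = Ge (j+1) := by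
      intro j hj
      have h2 : (Fin.succ (⟨j, hj⟩ : Fin r)) = (⟨min (j+1) r, by omega⟩ : Fin (r+1)) := by
        ext; simp [Fin.succ]; omega
      rw [h2]
    have hcast' : ∀ (j : ℕ) (hj : j < r), g (Fin.castSucc ⟨j, hj⟩) = Ge j := by
      intro j hj
      have h2 : (Fin.castSucc (⟨j, hj⟩ : Fin r)) = (⟨min j r, by omega⟩ : Fin (r+1)) := by
        ext; simp; omega
      rw [h2]
    have hmem : ∀ (j : ℕ), j < r - 1 →
        (Fe (j+1) - Fe j) + (Ge (j+1) - Ge j) = 2*n-1 ∨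
        (Fe (j+1) - Fe j) + (Ge (j+1) - Ge j) = 2*n := by
      intro j hj
      have hjr : j < r := by omega
      have h1 := (hblk ⟨j, hjr⟩).1 (by simpa using (by omega : j + 1 < r))
      rw [hsucc j hjr, hcast j hjr, hsucc' j hjr, hcast' j hjr] at h1
      simpa [Set.mem_insert_iff] using h1
    set code : ℕ → ℕ := fun j =>
      if (Fe (j+1) - Fe j) + (Ge (j+1) - Ge j) = 2*n
      then 2*n + (Fe (j+1) - Fe j) else (Fe (j+1) - Fe j) with hcode
    have hcodelt : ∀ (j : ℕ), j < r - 1 → code j < 4*n+1 := by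
      intro j hj
      rcases hmem j hj with h | h <;> simp only [hcode] <;> split_ifs <;> omega
    have hdig : ∀ (j : ℕ), j < r - 1 →
        dnu (code j) = Fe (j+1) - Fe j ∧ dta (code j) = Ge (j+1) - Ge j := by
      intro j hj
      rcases hmem j hj with h | h <;>
        simp only [hcode, hdnu, hdta] <;> split_ifs <;> constructor <;> omega
    set c : Fin (r-1) → Fin (4*n+1) := fun j => ⟨code j, hcodelt j j.isLt⟩ with hc
    have hc1 : ∀ (j : ℕ) (h : j < r - 1), ((c ⟨j, h⟩ : Fin (4*n+1)) : ℕ) = code j :=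
      fun _ _ => rfl
    refine ⟨c, ?_⟩
    have key1 : (F c).1 = f := by
      funext i
      show (if (i:ℕ) = r then k*n+1 else
        1 + ∑ j ∈ Finset.range (i:ℕ), dnu (if h : j < r-1 then (c ⟨j,h⟩ : ℕ) else 0)) = f i
      by_cases hir : (i:ℕ) = r
      · rw [if_pos hir]
        have hi : i = Fin.last r := by ext; simpa using hir
        rw [hi, hfl]
      · rw [if_neg hir]
        have hi : (i:ℕ) < r := by have := i.isLt; omega
        have hsum : ∑ j ∈ Finset.range (i:ℕ), dnu (if h : j < r-1 then (c ⟨j,h⟩ : ℕ) else 0)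
            = ∑ j ∈ Finset.range (i:ℕ), (Fe (j+1) - Fe j) := by
          refine Finset.sum_congr rfl (fun j hj => ?_)
          have hj' : j < r - 1 := by have := Finset.mem_range.mp hj; omega
          rw [dif_pos hj', hc1 j hj', (hdig j hj').1]
        rw [hsum]
        have hiF : f i = Fe (i:ℕ) := by
          have h2 : i = (⟨min (i:ℕ) r, by omega⟩ : Fin (r+1)) := by ext; simp; omega
          conv_lhs => rw [h2]
        rw [hiF, nat_telescope Fe hFem (i:ℕ), hFe0]
    have key2 : (F c).2 = g := by
      funext i
      show (if (i:ℕ) = r then k*n+1 else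
        1 + ∑ j ∈ Finset.range (i:ℕ), dta (if h : j < r-1 then (c ⟨j,h⟩ : ℕ) else 0)) = g i
      by_cases hir : (i:ℕ) = r
      · rw [if_pos hir]
        have hi : i = Fin.last r := by ext; simpa using hir
        rw [hi, hgl]
      · rw [if_neg hir]
        have hi : (i:ℕ) < r := by have := i.isLt; omega
        have hsum : ∑ j ∈ Finset.range (i:ℕ), dta (if h : j < r-1 then (c ⟨j,h⟩ : ℕ) else 0)
            = ∑ j ∈ Finset.range (i:ℕ), (Ge (j+1) - Ge j) := by
          refine Finset.sum_congr rfl (fun j hj => ?_)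
          have hj' : j < r - 1 := by have := Finset.mem_range.mp hj; omega
          rw [dif_pos hj', hc1 j hj', (hdig j hj').2]
        rw [hsum]
        have hiG : g i = Ge (i:ℕ) := by
          have h2 : i = (⟨min (i:ℕ) r, by omega⟩ : Fin (r+1)) := by ext; simp; omega
          conv_lhs => rw [h2]
        rw [hiG, nat_telescope Ge hGem (i:ℕ), hGe0]
    exact Prod.ext key1 key2
  have h1 : Nat.card (PartSet r k n) ≤ Nat.card (Set.range F) :=
    Nat.card_mono (Set.finite_range F) hsub
  have h2 := Finite.card_range_le F
  calc Nat.card (PartSet r k n) ≤ Nat.card (Fin (r-1) → Fin (4*n+1)) := h1.trans h2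
    _ = (4*n+1)^(r-1) := by simp [Nat.card_eq_fintype_card]

private lemma log_four_le (n : ℕ) (hn : 2 ≤ n) :
    Real.log 4 ≤ (2*(n:ℝ)-1) * Real.log ((2*(n:ℝ)+1)/(2*(n:ℝ)-1)) := by
  have hN : (2:ℝ) ≤ (n:ℝ) := by exact_mod_cast hn
  set N := (n:ℝ) with hNdef
  have h2 : (0:ℝ) < 2*N-1 := by linarith
  have hu : (0:ℝ) ≤ 2/(2*N-1) := by positivity
  have hm : ((2*n-1 : ℕ):ℝ) = 2*N-1 := by
    have : 1 ≤ 2*n := by omega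
    push_cast [this]
    ring
  have hb := bernoulli2 (2*n-1) (2/(2*N-1)) hu
  rw [hm] at hb
  have h4 : (4:ℝ) ≤ (1+2/(2*N-1))^(2*n-1 : ℕ) := by
    refine le_trans ?_ hb
    have e1 : (2*N-1) * (2/(2*N-1)) = 2 := by field_simp
    have e2 : (2*N-1)*((2*N-1)-1)/2*(2/(2*N-1))^2 = 2*((2*N-2)/(2*N-1)) := by
      field_simp
      ring
    rw [e1, e2]
    have h7 : (1:ℝ) ≤ 2*((2*N-2)/(2*N-1)) := by
      rw [show 2*((2*N-2)/(2*N-1)) = (4*N-4)/(2*N-1) by ring, le_div_iff₀ h2]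
      linarith
    linarith
  have h5 : Real.log 4 ≤ Real.log ((1+2/(2*N-1))^(2*n-1 : ℕ)) :=
    Real.log_le_log (by norm_num) h4
  rw [Real.log_pow, hm] at h5
  have h6 : 1 + 2/(2*N-1) = (2*N+1)/(2*N-1) := by field_simp; ring
  rwa [h6] at h5

private lemma key_ineq (n : ℕ) (hn : 2 ≤ n) :
    2 * Real.log (4*(n:ℝ)+1) ≤ Real.log 4 + binEnt (2/(2*(n:ℝ)+1)) * (2*(n:ℝ)+1) := by
  have hN : (2:ℝ) ≤ (n:ℝ) := by exact_mod_cast hn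
  set N := (n:ℝ) with hNdef
  have h1 : (0:ℝ) < 2*N+1 := by linarith
  have h2 : (0:ℝ) < 2*N-1 := by linarith
  rw [binEnt_eval N hN]
  have hmono : Real.log (4*N+1) ≤ Real.log (2*(2*N+1)) :=
    Real.log_le_log (by linarith) (by linarith)
  have hlog2 : Real.log (2*(2*N+1)) = Real.log 2 + Real.log (2*N+1) :=
    Real.log_mul (by norm_num) h1.ne'
  have hlog4 : Real.log 4 = 2 * Real.log 2 := by
    rw [show (4:ℝ) = 2^2 by norm_num, Real.log_pow]; push_cast; ring
  have hL3 := log_four_le n hn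
  rw [Real.log_div h1.ne' (by norm_num : (2:ℝ) ≠ 0)]
  linarith

private lemma cinf_le_psi (n : ℕ) (hn : 2 ≤ n) :
    Real.log 4/(2*(n:ℝ)-1) + binEnt (2/(2*(n:ℝ)+1)) * (2*(n:ℝ)+1)/(2*(n:ℝ)-1)
      ≤ 2/(2*(n:ℝ)-1) * ((2*(n:ℝ)+1)/(2*(n:ℝ)-1) + Real.log (2*(n:ℝ)-1)) := by
  have hN : (2:ℝ) ≤ (n:ℝ) := by exact_mod_cast hn
  set N := (n:ℝ) with hNdef
  have h1 : (0:ℝ) < 2*N+1 := by linarith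
  have h2 : (0:ℝ) < 2*N-1 := by linarith
  have main : Real.log 4 + binEnt (2/(2*N+1)) * (2*N+1)
      ≤ 2 * ((2*N+1)/(2*N-1) + Real.log (2*N-1)) := by
    rw [binEnt_eval N hN]
    have hLle : Real.log ((2*N+1)/(2*N-1)) ≤ 2/(2*N-1) := by
      have := Real.log_le_sub_one_of_pos (by positivity : (0:ℝ) < (2*N+1)/(2*N-1))
      have e : (2*N+1)/(2*N-1) - 1 = 2/(2*N-1) := by field_simp; norm_num
      linarith [this, e]
    have hLsplit : Real.log ((2*N+1)/(2*N-1)) = Real.log (2*N+1) - Real.log (2*N-1) :=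
      Real.log_div h1.ne' h2.ne'
    have hlog4 : Real.log 4 = 2 * Real.log 2 := by
      rw [show (4:ℝ) = 2^2 by norm_num, Real.log_pow]; push_cast; ring
    have hlogq : Real.log ((2*N+1)/2) = Real.log (2*N+1) - Real.log 2 :=
      Real.log_div h1.ne' (by norm_num)
    have hmul : (2*N+1) * Real.log ((2*N+1)/(2*N-1)) ≤ (2*N+1) * (2/(2*N-1)) :=
      mul_le_mul_of_nonneg_left hLle (by linarith)
    have e2 : 2 * ((2*N+1)/(2*N-1)) = (2*N+1) * (2/(2*N-1)) := by ring
    nlinarith [hmul, hLsplit, hlogq]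
  calc Real.log 4/(2*N-1) + binEnt (2/(2*N+1)) * (2*N+1)/(2*N-1)
      = (Real.log 4 + binEnt (2/(2*N+1)) * (2*N+1))/(2*N-1) := by ring
    _ ≤ (2 * ((2*N+1)/(2*N-1) + Real.log (2*N-1)))/(2*N-1) := by
        exact div_le_div_of_nonneg_right main h2.le
    _ = 2/(2*N-1) * ((2*N+1)/(2*N-1) + Real.log (2*N-1)) := by ring


set_option maxHeartbeats 1000000 in
theorem card_B_le (n : ℕ) (hn : 2 ≤ n) :
    (∃ e : ℕ → ℝ, Tendsto e atTop (nhds 0) ∧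
      ∀ k : ℕ, 1 ≤ k →
        ((∑ r ∈ Finset.Icc k (Nat.ceil ((2 * (k : ℚ) * n) / (2 * (n : ℚ) - 1))),
            Nat.card (PartSet r k n) : ℕ) : ℝ) ≤
          Real.exp (((2 / (2 * (n : ℝ) - 1)) *
            ((2 * (n : ℝ) + 1) / (2 * (n : ℝ) - 1) + Real.log (2 * (n : ℝ) - 1)) + e k)
              * k * n)) ∧
    (∀ k : ℕ, 1 ≤ k →
      ((∑ r ∈ Finset.Icc k (Nat.ceil ((2 * (k : ℚ) * n) / (2 * (n : ℚ) - 1))),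
          Nat.card (PartSet r k n) : ℕ) : ℝ) ≤
        ((k : ℝ) / (2 * (n : ℝ) - 1) + 2) *
          Real.exp (((Real.log 4) / (2 * (n : ℝ) - 1) + Real.log (2 * (n : ℝ)) / ((n : ℝ) * k)
            + binEnt (2 / (2 * (n : ℝ) + 1)) * (2 * (n : ℝ) + 1) / (2 * (n : ℝ) - 1))
              * n * k)) := by
  have hN : (2:ℝ) ≤ (n:ℝ) := by exact_mod_cast hn
  have h2 : (0:ℝ) < 2*(n:ℝ)-1 := by linarith
  have h1 : (0:ℝ) < 2*(n:ℝ)+1 := by linarith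
  -- Part 2 : the precise bound
  have part2 : ∀ k : ℕ, 1 ≤ k →
      ((∑ r ∈ Finset.Icc k (Nat.ceil ((2 * (k : ℚ) * n) / (2 * (n : ℚ) - 1))),
          Nat.card (PartSet r k n) : ℕ) : ℝ) ≤
        ((k : ℝ) / (2 * (n : ℝ) - 1) + 2) *
          Real.exp (((Real.log 4) / (2 * (n : ℝ) - 1) + Real.log (2 * (n : ℝ)) / ((n : ℝ) * k)
            + binEnt (2 / (2 * (n : ℝ) + 1)) * (2 * (n : ℝ) + 1) / (2 * (n : ℝ) - 1))
              * n * k) := by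
    intro k hk
    set R := Nat.ceil ((2 * (k : ℚ) * n) / (2 * (n : ℚ) - 1)) with hRdef
    have hK1 : (1:ℝ) ≤ (k:ℝ) := by exact_mod_cast hk
    have hK0 : (0:ℝ) < (k:ℝ) := by linarith
    -- real bound on R
    have hRle : (R:ℝ) ≤ 2*(k:ℝ)*(n:ℝ)/(2*(n:ℝ)-1) + 1 := by
      have hnq : (2:ℚ) ≤ (n:ℚ) := by exact_mod_cast hn
      have hq2 : (0:ℚ) < 2*(n:ℚ)-1 := by linarith
      have hq0 : (0:ℚ) ≤ (2 * (k : ℚ) * n) / (2 * (n : ℚ) - 1) :=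
        div_nonneg (by positivity) hq2.le
      have hceil := Nat.ceil_lt_add_one hq0
      have hcast : ((R:ℚ):ℝ) < (((2 * (k : ℚ) * n) / (2 * (n : ℚ) - 1) + 1 : ℚ):ℝ) :=
        Rat.cast_lt.mpr hceil
      push_cast at hcast
      linarith
    -- sum bound in ℕ
    have hterm : ∀ r ∈ Finset.Icc k R, Nat.card (PartSet r k n) ≤ (4*n+1)^(R-1) := by
      intro r hr
      obtain ⟨hr1, hr2⟩ := Finset.mem_Icc.mp hr
      exact (partset_card_le n k r (by omega)).trans
        (Nat.pow_le_pow_right (by omega) (by omega))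
    have hsumN : (∑ r ∈ Finset.Icc k R, Nat.card (PartSet r k n))
        ≤ (Finset.Icc k R).card * (4*n+1)^(R-1) := by
      simpa [smul_eq_mul] using Finset.sum_le_card_nsmul (Finset.Icc k R) _ _ hterm
    -- card bound in ℝ
    have hcard : (((Finset.Icc k R).card : ℕ) : ℝ) ≤ (k:ℝ)/(2*(n:ℝ)-1) + 2 := by
      rw [Nat.card_Icc]
      have hx : 2*(k:ℝ)*(n:ℝ)/(2*(n:ℝ)-1) - (k:ℝ) = (k:ℝ)/(2*(n:ℝ)-1) := by
        field_simp; ring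
      rcases le_or_gt k (R+1) with h | h
      · rw [Nat.cast_sub h]
        push_cast
        linarith
      · rw [Nat.sub_eq_zero_of_le (by omega)]
        have h0 : (0:ℝ) ≤ (k:ℝ)/(2*(n:ℝ)-1) := div_nonneg hK0.le h2.le
        simp
        linarith
    -- power bound in ℝ
    have hpowR : (((4*n+1)^(R-1) : ℕ) : ℝ)
        ≤ Real.exp (((Real.log 4) / (2 * (n : ℝ) - 1) + Real.log (2 * (n : ℝ)) / ((n : ℝ) * k)
            + binEnt (2 / (2 * (n : ℝ) + 1)) * (2 * (n : ℝ) + 1) / (2 * (n : ℝ) - 1))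
              * n * k) := by
      have hb : (0:ℝ) < 4*(n:ℝ)+1 := by linarith
      have hcastpow : (((4*n+1)^(R-1) : ℕ) : ℝ) = (4*(n:ℝ)+1)^((R-1 : ℕ)) := by push_cast; ring
      have hexp : (4*(n:ℝ)+1)^((R-1:ℕ)) = Real.exp (((R-1:ℕ):ℝ) * Real.log (4*(n:ℝ)+1)) := by
        rw [Real.exp_nat_mul, Real.exp_log hb]
      rw [hcastpow, hexp, Real.exp_le_exp]
      -- bound the exponent
      have hm1 : ((R-1 : ℕ) : ℝ) ≤ 2*(k:ℝ)*(n:ℝ)/(2*(n:ℝ)-1) := by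
        have hx0 : (0:ℝ) ≤ 2*(k:ℝ)*(n:ℝ)/(2*(n:ℝ)-1) := div_nonneg (by positivity) h2.le
        rcases Nat.eq_zero_or_pos R with h | h
        · simp [h]; linarith
        · rw [Nat.cast_sub h]
          push_cast
          linarith
      have hlogpos : 0 ≤ Real.log (4*(n:ℝ)+1) := Real.log_nonneg (by linarith)
      have step1 : ((R-1 : ℕ) : ℝ) * Real.log (4*(n:ℝ)+1)
          ≤ (2*(k:ℝ)*(n:ℝ)/(2*(n:ℝ)-1)) * Real.log (4*(n:ℝ)+1) :=
        mul_le_mul_of_nonneg_right hm1 hlogpos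
      have hfac : (0:ℝ) ≤ (k:ℝ)*(n:ℝ)/(2*(n:ℝ)-1) := div_nonneg (by positivity) h2.le
      have step2 := mul_le_mul_of_nonneg_left (key_ineq n hn) hfac
      have hlog2N : 0 ≤ Real.log (2*(n:ℝ)) := Real.log_nonneg (by linarith)
      have hNK : (n:ℝ)*(k:ℝ) ≠ 0 := by positivity
      have hid : ((Real.log 4) / (2 * (n : ℝ) - 1) + Real.log (2 * (n : ℝ)) / ((n : ℝ) * k)
            + binEnt (2 / (2 * (n : ℝ) + 1)) * (2 * (n : ℝ) + 1) / (2 * (n : ℝ) - 1))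
              * n * k
          = (k:ℝ)*(n:ℝ)/(2*(n:ℝ)-1) * (Real.log 4 + binEnt (2/(2*(n:ℝ)+1)) * (2*(n:ℝ)+1))
            + Real.log (2*(n:ℝ)) := by
        field_simp
        ring
      have hlhs : (2*(k:ℝ)*(n:ℝ)/(2*(n:ℝ)-1)) * Real.log (4*(n:ℝ)+1)
          = (k:ℝ)*(n:ℝ)/(2*(n:ℝ)-1) * (2 * Real.log (4*(n:ℝ)+1)) := by ring
      rw [hid]
      rw [hlhs] at step1
      linarith
    -- combine
    calc ((∑ r ∈ Finset.Icc k R, Nat.card (PartSet r k n) : ℕ) : ℝ)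
        ≤ (((Finset.Icc k R).card : ℕ) : ℝ) * (((4*n+1)^(R-1) : ℕ) : ℝ) := by
          exact_mod_cast hsumN
      _ ≤ ((k : ℝ) / (2 * (n : ℝ) - 1) + 2) *
          Real.exp (((Real.log 4) / (2 * (n : ℝ) - 1) + Real.log (2 * (n : ℝ)) / ((n : ℝ) * k)
            + binEnt (2 / (2 * (n : ℝ) + 1)) * (2 * (n : ℝ) + 1) / (2 * (n : ℝ) - 1))
              * n * k) := by
          apply mul_le_mul hcard hpowR (by positivity) (by positivity)
  refine ⟨?_, part2⟩
  -- Part 1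
  set ψ : ℝ := 2 / (2 * (n : ℝ) - 1) *
      ((2 * (n : ℝ) + 1) / (2 * (n : ℝ) - 1) + Real.log (2 * (n : ℝ) - 1)) with hψ
  set Ci : ℝ := Real.log 4/(2*(n:ℝ)-1)
      + binEnt (2/(2*(n:ℝ)+1)) * (2*(n:ℝ)+1)/(2*(n:ℝ)-1) with hCi
  set e : ℕ → ℝ := fun k => if k = 0 then 0 else
      max (Ci - ψ + Real.log (2*(n:ℝ))/((n:ℝ)*(k:ℝ))
        + Real.log ((k:ℝ)/(2*(n:ℝ)-1)+2)/((k:ℝ)*(n:ℝ))) 0 with he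
  clear_value ψ Ci e
  have hA : Ci - ψ ≤ 0 := by
    have := cinf_le_psi n hn
    rw [hCi, hψ]
    linarith
  refine ⟨e, ?_, ?_⟩
  · -- Tendsto
    have t1 : Tendsto (fun k : ℕ => Real.log (2*(n:ℝ))/((n:ℝ)*(k:ℝ))) atTop (nhds 0) := by
      have hrw : (fun k : ℕ => Real.log (2*(n:ℝ))/((n:ℝ)*(k:ℝ)))
          = fun k : ℕ => (Real.log (2*(n:ℝ))/(n:ℝ))/(k:ℝ) := by
        funext k; rw [div_div]
      rw [hrw]
      exact tendsto_const_div_atTop_nhds_zero_nat _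
    have t2 : Tendsto (fun k : ℕ =>
        Real.log ((k:ℝ)/(2*(n:ℝ)-1)+2)/((k:ℝ)*(n:ℝ))) atTop (nhds 0) := by
      have hbase : Tendsto (fun x : ℝ => Real.log x / x) atTop (nhds 0) :=
        Real.isLittleO_log_id_atTop.tendsto_div_nhds_zero
      have hshift : Tendsto (fun k : ℕ => (k:ℝ)+2) atTop atTop :=
        tendsto_atTop_add_const_right _ 2 tendsto_natCast_atTop_atTop
      have hcomp : Tendsto (fun k : ℕ => Real.log ((k:ℝ)+2) / ((k:ℝ)+2)) atTop (nhds 0) :=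
        hbase.comp hshift
      have hcomp3 : Tendsto (fun k : ℕ => 3 * (Real.log ((k:ℝ)+2) / ((k:ℝ)+2))) atTop (nhds 0) := by
        simpa using hcomp.const_mul 3
      apply squeeze_zero' ?_ ?_ hcomp3
      · filter_upwards with k
        apply div_nonneg
        · apply Real.log_nonneg
          have : (0:ℝ) ≤ (k:ℝ)/(2*(n:ℝ)-1) := div_nonneg (Nat.cast_nonneg k) h2.le
          linarith
        · positivity
      · filter_upwards [eventually_ge_atTop 1] with k hk
        have hK1 : (1:ℝ) ≤ (k:ℝ) := by exact_mod_cast hk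
        have ha : (0:ℝ) < (k:ℝ)+2 := by linarith
        have hb : (0:ℝ) < (k:ℝ)*(n:ℝ) := by nlinarith
        have hlogle : Real.log ((k:ℝ)/(2*(n:ℝ)-1)+2) ≤ Real.log ((k:ℝ)+2) := by
          apply Real.log_le_log (by positivity)
          have : (k:ℝ)/(2*(n:ℝ)-1) ≤ (k:ℝ) := by
            apply div_le_self (by linarith) (by linarith)
          linarith
        have hlogpos : 0 ≤ Real.log ((k:ℝ)+2) := Real.log_nonneg (by linarith)
        calc Real.log ((k:ℝ)/(2*(n:ℝ)-1)+2)/((k:ℝ)*(n:ℝ))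
            ≤ Real.log ((k:ℝ)+2)/((k:ℝ)*(n:ℝ)) := by
              apply div_le_div_of_nonneg_right hlogle hb.le
          _ ≤ 3 * (Real.log ((k:ℝ)+2) / ((k:ℝ)+2)) := by
              rw [div_le_iff₀ hb]
              have hd0 : 0 ≤ Real.log ((k:ℝ)+2) / ((k:ℝ)+2) := div_nonneg hlogpos ha.le
              have hdd : Real.log ((k:ℝ)+2) = (Real.log ((k:ℝ)+2) / ((k:ℝ)+2)) * ((k:ℝ)+2) := by
                field_simp
              have hkn : (k:ℝ)+2 ≤ 3*((k:ℝ)*(n:ℝ)) := by nlinarith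
              calc Real.log ((k:ℝ)+2) = (Real.log ((k:ℝ)+2) / ((k:ℝ)+2)) * ((k:ℝ)+2) := hdd
                _ ≤ (Real.log ((k:ℝ)+2) / ((k:ℝ)+2)) * (3*((k:ℝ)*(n:ℝ))) :=
                    mul_le_mul_of_nonneg_left hkn hd0
                _ = 3 * (Real.log ((k:ℝ)+2) / ((k:ℝ)+2)) * ((k:ℝ)*(n:ℝ)) := by ring
    have t3 : Tendsto (fun k : ℕ => Ci - ψ + Real.log (2*(n:ℝ))/((n:ℝ)*(k:ℝ))
        + Real.log ((k:ℝ)/(2*(n:ℝ)-1)+2)/((k:ℝ)*(n:ℝ))) atTop (nhds (Ci - ψ)) := by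
      have h := (tendsto_const_nhds (x := Ci - ψ) (f := atTop (α := ℕ))).add t1 |>.add t2
      simpa using h
    have t4 : Tendsto (fun k : ℕ => max (Ci - ψ + Real.log (2*(n:ℝ))/((n:ℝ)*(k:ℝ))
        + Real.log ((k:ℝ)/(2*(n:ℝ)-1)+2)/((k:ℝ)*(n:ℝ))) 0) atTop (nhds 0) := by
      have h := t3.max (tendsto_const_nhds (x := (0:ℝ)) (f := atTop (α := ℕ)))
      rwa [max_eq_right hA] at h
    apply t4.congr'
    filter_upwards [eventually_ge_atTop 1] with k hk
    have hk0 : k ≠ 0 := by omega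
    rw [he]
    simp only [if_neg hk0]
  · -- the bound
    intro k hk
    have hk0 : k ≠ 0 := by omega
    have hK1 : (1:ℝ) ≤ (k:ℝ) := by exact_mod_cast hk
    have hK0 : (0:ℝ) < (k:ℝ) := by linarith
    have hpos : (0:ℝ) < (k:ℝ)/(2*(n:ℝ)-1)+2 := by
      have : (0:ℝ) ≤ (k:ℝ)/(2*(n:ℝ)-1) := div_nonneg hK0.le h2.le
      linarith
    have hek : Ci - ψ + Real.log (2*(n:ℝ))/((n:ℝ)*(k:ℝ))
        + Real.log ((k:ℝ)/(2*(n:ℝ)-1)+2)/((k:ℝ)*(n:ℝ)) ≤ e k := by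
      rw [he]; simp only [if_neg hk0]
      exact le_max_left _ _
    have hKN : (k:ℝ)*(n:ℝ) ≠ 0 := by positivity
    have hid : (ψ + (Ci - ψ + Real.log (2*(n:ℝ))/((n:ℝ)*(k:ℝ))
        + Real.log ((k:ℝ)/(2*(n:ℝ)-1)+2)/((k:ℝ)*(n:ℝ)))) * (k:ℝ) * (n:ℝ)
        = ((Real.log 4) / (2 * (n : ℝ) - 1) + Real.log (2 * (n : ℝ)) / ((n : ℝ) * k)
            + binEnt (2 / (2 * (n : ℝ) + 1)) * (2 * (n : ℝ) + 1) / (2 * (n : ℝ) - 1))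
              * n * k + Real.log ((k:ℝ)/(2*(n:ℝ)-1)+2) := by
      rw [hCi]
      field_simp
      ring
    calc ((∑ r ∈ Finset.Icc k (Nat.ceil ((2 * (k : ℚ) * n) / (2 * (n : ℚ) - 1))),
          Nat.card (PartSet r k n) : ℕ) : ℝ)
        ≤ ((k : ℝ) / (2 * (n : ℝ) - 1) + 2) *
          Real.exp (((Real.log 4) / (2 * (n : ℝ) - 1) + Real.log (2 * (n : ℝ)) / ((n : ℝ) * k)
            + binEnt (2 / (2 * (n : ℝ) + 1)) * (2 * (n : ℝ) + 1) / (2 * (n : ℝ) - 1))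
              * n * k) := part2 k hk
      _ = Real.exp ((ψ + (Ci - ψ + Real.log (2*(n:ℝ))/((n:ℝ)*(k:ℝ))
            + Real.log ((k:ℝ)/(2*(n:ℝ)-1)+2)/((k:ℝ)*(n:ℝ)))) * (k:ℝ) * (n:ℝ)) := by
          rw [hid, Real.exp_add, Real.exp_log hpos]
          ring
      _ ≤ Real.exp ((ψ + e k) * (k:ℝ) * (n:ℝ)) := by
          rw [Real.exp_le_exp]
          have hmul : (0:ℝ) ≤ (k:ℝ)*(n:ℝ) := by positivity
          have := mul_le_mul_of_nonneg_right (add_le_add_right hek ψ) hmul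
          calc _ ≤ (ψ + e k) * ((k:ℝ)*(n:ℝ)) := by
                rw [mul_assoc]
                exact this
            _ = (ψ + e k) * (k:ℝ) * (n:ℝ) := by ring
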